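/- For a k-threshold hypergraph with string 0^{m₁} k ⋯ 0^{m_d} k, the column sums C_j of the Ferrer's diagram of its degree sequence satisfy C_i = Σ_{j=1}^{d−i+1} m_j + k·d for all i = 1, …, d, and C_{D_{d−i+1}} = k(d − i + 1) for all i = 2, …, d, where D_i is the i-th largest distinct degree. -/

import Mathlib

open Finset

/-- The hypergraph Laplacian as an operator on real-valued vertex functions:
`(L_G f)(v) = ∑_{e ∋ v} (1/(|e|-1)) ∑_{u ∈ e} (f v - f u)`. -/
noncomputable def lapOp {V : Type} [Fintype V] [DecidableEq V] (E : Finset (Finset V)) (f : V → ℝ) : V → ℝ :=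
  fun v => ∑ e ∈ E.filter (fun e => v ∈ e), (1 / ((e.card : ℝ) - 1)) * ∑ u ∈ e, (f v - f u)

/-- The matrix of the hypergraph Laplacian. -/
noncomputable def lapMatrix {V : Type} [Fintype V] [DecidableEq V] (E : Finset (Finset V)) : Matrix V V ℝ :=
  Matrix.of fun v w => ∑ e ∈ E.filter (fun e => v ∈ e),
    (1 / ((e.card : ℝ) - 1)) * ((if w = v then (e.card : ℝ) else 0) - (if w ∈ e then 1 else 0))

/-- Edge set obtained from `E` by adding a `k`-dominating set `S = Fin k` of fresh vertices:
the new edges are `S ∪ {u}` for every old vertex `u`. -/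
def domEdges {V : Type} [Fintype V] [DecidableEq V] (E : Finset (Finset V)) (k : ℕ) :
    Finset (Finset (V ⊕ Fin k)) :=
  E.image (Finset.image Sum.inl) ∪
    (Finset.univ : Finset V).image
      (fun u => insert (Sum.inl u) ((Finset.univ : Finset (Fin k)).image Sum.inr))

/-- Vertex type of the threshold hypergraph with string `0^{m 0} (k 0) 0^{m 1} (k 1) ⋯`:
`inl ⟨i, a⟩` is the `a`-th isolated vertex added before the `i`-th domination, and
`inr ⟨i, b⟩` is the `b`-th vertex of the `i`-th dominating set. -/
abbrev TV (d : ℕ) (m k : Fin d → ℕ) : Type :=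
  (Σ i : Fin d, Fin (m i)) ⊕ (Σ i : Fin d, Fin (k i))

/-- Vertices present just before the `i`-th domination is applied. -/
def before (d : ℕ) (m k : Fin d → ℕ) (i : Fin d) : Finset (TV d m k) :=
  (((Finset.univ.filter (fun j : Fin d => j ≤ i)).sigma
      fun j => (Finset.univ : Finset (Fin (m j)))).image Sum.inl) ∪
  (((Finset.univ.filter (fun j : Fin d => j < i)).sigma
      fun j => (Finset.univ : Finset (Fin (k j)))).image Sum.inr)

/-- The `i`-th dominating set. -/
def domSet (d : ℕ) (m k : Fin d → ℕ) (i : Fin d) : Finset (TV d m k) :=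
  (Finset.univ : Finset (Fin (k i))).image fun b => Sum.inr ⟨i, b⟩

/-- The edge set of the threshold hypergraph `0^{m 0} (k 0) 0^{m 1} (k 1) ⋯ 0^{m (d-1)} (k (d-1))`:
the `i`-th domination adds the edges `S_i ∪ {u}` for all previously present vertices `u`. -/
def thrEdges (d : ℕ) (m k : Fin d → ℕ) : Finset (Finset (TV d m k)) :=
  Finset.univ.biUnion fun i : Fin d =>
    (before d m k i).image fun u => insert u (domSet d m k i)


open Finset

section
variable {d : ℕ} {m kf : Fin d → ℕ}

lemma mem_before_inl {i j : Fin d} {a : Fin (m j)} :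
    (Sum.inl ⟨j,a⟩ : TV d m kf) ∈ before d m kf i ↔ j ≤ i := by
  simp [before]

lemma mem_before_inr {i j : Fin d} {b : Fin (kf j)} :
    (Sum.inr ⟨j,b⟩ : TV d m kf) ∈ before d m kf i ↔ j < i := by
  simp [before]

lemma mem_domSet {i : Fin d} {v : TV d m kf} :
    v ∈ domSet d m kf i ↔ ∃ b : Fin (kf i), v = Sum.inr ⟨i, b⟩ := by
  simp [domSet, eq_comm]

lemma not_mem_domSet_of_mem_before {i : Fin d} {u : TV d m kf}
    (hu : u ∈ before d m kf i) : u ∉ domSet d m kf i := by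
  intro hmem
  rw [mem_domSet] at hmem
  obtain ⟨b, rfl⟩ := hmem
  rw [mem_before_inr] at hu
  exact lt_irrefl _ hu

lemma card_before (hk : ∀ i, 1 ≤ kf i) (i : Fin d) :
    (before d m kf i).card
      = (∑ j ∈ Finset.univ.filter (fun j : Fin d => j ≤ i), m j)
        + ∑ j ∈ Finset.univ.filter (fun j : Fin d => j < i), kf j := by
  rw [before, card_union_of_disjoint, card_image_of_injective _ Sum.inl_injective,
    card_image_of_injective _ Sum.inr_injective, card_sigma, card_sigma]
  · simp
  · simp only [disjoint_left, mem_image]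
    rintro v ⟨p, hp, rfl⟩ ⟨q, hq, h⟩
    exact absurd h (by simp)

lemma edge_inj (hk : ∀ i, 1 ≤ kf i) {i i' : Fin d} {u u' : TV d m kf}
    (hu : u ∈ before d m kf i) (hu' : u' ∈ before d m kf i')
    (h : insert u (domSet d m kf i) = insert u' (domSet d m kf i')) :
    i = i' ∧ u = u' := by
  have hii : i = i' := by
    by_contra hne
    -- every element of domSet i' lies in insert u (domSet i); since i ≠ i' it must be u
    have h1 : (Sum.inr ⟨i', ⟨0, hk i'⟩⟩ : TV d m kf) ∈ insert u (domSet d m kf i) := by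
      rw [h]; exact mem_insert_of_mem (mem_domSet.2 ⟨⟨0, hk i'⟩, rfl⟩)
    have h2 : (Sum.inr ⟨i, ⟨0, hk i⟩⟩ : TV d m kf) ∈ insert u' (domSet d m kf i') := by
      rw [← h]; exact mem_insert_of_mem (mem_domSet.2 ⟨⟨0, hk i⟩, rfl⟩)
    rw [mem_insert, mem_domSet] at h1 h2
    have hu1 : u = (Sum.inr ⟨i', ⟨0, hk i'⟩⟩ : TV d m kf) := by
      rcases h1 with h1 | ⟨b, hb⟩
      · exact h1.symm
      · exact absurd (congrArg (fun v : TV d m kf => match v with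
          | Sum.inr x => x.1 | Sum.inl x => x.1) hb) (by simpa using (Ne.symm hne))
    have hu2 : u' = (Sum.inr ⟨i, ⟨0, hk i⟩⟩ : TV d m kf) := by
      rcases h2 with h2 | ⟨b, hb⟩
      · exact h2.symm
      · exact absurd (congrArg (fun v : TV d m kf => match v with
          | Sum.inr x => x.1 | Sum.inl x => x.1) hb) (by simpa using hne)
    subst hu1; subst hu2
    rw [mem_before_inr] at hu hu'
    exact absurd (hu.trans hu') (lt_irrefl _)
  subst hii
  refine ⟨rfl, ?_⟩
  have : u ∈ insert u' (domSet d m kf i) := by rw [← h]; exact mem_insert_self _ _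
  rcases mem_insert.1 this with h' | h'
  · exact h'
  · exact absurd h' (not_mem_domSet_of_mem_before hu)

lemma deg_eq_sum (hk : ∀ i, 1 ≤ kf i) (v : TV d m kf) :
    ((thrEdges d m kf).filter (fun e => v ∈ e)).card
      = ∑ i : Fin d,
          ((before d m kf i).filter
            (fun u => v ∈ insert u (domSet d m kf i))).card := by
  rw [thrEdges, filter_biUnion, card_biUnion]
  · refine Finset.sum_congr rfl fun i _ => ?_
    rw [Finset.filter_image, card_image_of_injOn]
    intro u hu u' hu' h
    simp only [coe_filter, Set.mem_setOf_eq] at hu hu'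
    exact (edge_inj hk hu.1 hu'.1 h).2
  · intro i _ i' _ hne
    simp only [disjoint_left, mem_filter, mem_image]
    rintro e ⟨⟨u, hu, rfl⟩, -⟩ ⟨⟨u', hu', he⟩, -⟩
    exact hne ((edge_inj hk hu' hu he).1).symm
end
def dInr (d k : ℕ) (m : Fin d → ℕ) (j : Fin d) : ℕ :=
  (∑ t ∈ Finset.univ.filter (fun t : Fin d => t ≤ j), m t) + k * j.val + (d - 1 - j.val)

section
variable {d k : ℕ} {m : Fin d → ℕ}

lemma deg_inl (hk : 1 ≤ k) (j : Fin d) (a : Fin (m j)) :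
    ((thrEdges d m (fun _ => k)).filter
      (fun e => (Sum.inl ⟨j,a⟩ : TV d m (fun _ => k)) ∈ e)).card = d - j.val := by
  rw [deg_eq_sum (fun _ => hk)]
  have h1 : ∀ i : Fin d,
      ((before d m (fun _ => k) i).filter
        (fun u => (Sum.inl ⟨j,a⟩ : TV d m (fun _ => k)) ∈ insert u (domSet d m (fun _ => k) i))).card
      = if j ≤ i then 1 else 0 := by
    intro i
    have : (before d m (fun _ => k) i).filter
        (fun u => (Sum.inl ⟨j,a⟩ : TV d m (fun _ => k)) ∈ insert u (domSet d m (fun _ => k) i))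
        = (before d m (fun _ => k) i).filter (fun u => u = (Sum.inl ⟨j,a⟩ : TV d m (fun _ => k))) := by
      refine filter_congr fun u hu => ?_
      simp [mem_domSet, eq_comm]
    rw [this, Finset.filter_eq']
    simp only [mem_before_inl]
    split <;> simp
  rw [Finset.sum_congr rfl fun i _ => h1 i, ← Finset.card_filter]
  have : Finset.univ.filter (fun i : Fin d => j ≤ i) = Finset.Ici j := by ext; simp
  rw [this, Fin.card_Ici]

lemma deg_inr (hk : 1 ≤ k) (j : Fin d) (b : Fin k) :
    ((thrEdges d m (fun _ => k)).filter
      (fun e => (Sum.inr ⟨j,b⟩ : TV d m (fun _ => k)) ∈ e)).card = dInr d k m j := by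
  rw [deg_eq_sum (fun _ => hk)]
  have h1 : ∀ i : Fin d,
      ((before d m (fun _ => k) i).filter
        (fun u => (Sum.inr ⟨j,b⟩ : TV d m (fun _ => k)) ∈ insert u (domSet d m (fun _ => k) i))).card
      = if i = j then (before d m (fun _ => k) j).card else (if j < i then 1 else 0) := by
    intro i
    by_cases hij : i = j
    · subst hij
      rw [if_pos rfl]
      congr 1
      refine Finset.filter_true_of_mem fun u hu => ?_
      exact Finset.mem_insert_of_mem (mem_domSet.2 ⟨b, rfl⟩)
    · rw [if_neg hij]
      have : (before d m (fun _ => k) i).filter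
          (fun u => (Sum.inr ⟨j,b⟩ : TV d m (fun _ => k)) ∈ insert u (domSet d m (fun _ => k) i))
          = (before d m (fun _ => k) i).filter (fun u => u = (Sum.inr ⟨j,b⟩ : TV d m (fun _ => k))) := by
        refine filter_congr fun u hu => ?_
        simp only [Finset.mem_insert, mem_domSet]
        constructor
        · rintro (h | ⟨b', hb'⟩)
          · exact h.symm
          · exact absurd (congrArg (fun v : TV d m (fun _ => k) => match v with
              | Sum.inr x => x.1 | Sum.inl x => x.1) hb') (by simpa using Ne.symm hij)
        · rintro rfl; exact Or.inl rfl
      rw [this, Finset.filter_eq']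
      simp only [mem_before_inr]
      split <;> simp
  rw [Finset.sum_congr rfl fun i _ => h1 i]
  rw [← Finset.add_sum_erase _ _ (Finset.mem_univ j), if_pos rfl]
  have h2 : ∑ i ∈ Finset.univ.erase j,
      (if i = j then (before d m (fun _ => k) j).card else (if j < i then 1 else 0))
      = ∑ i ∈ Finset.univ.erase j, (if j < i then 1 else 0) :=
    Finset.sum_congr rfl fun i hi => if_neg (Finset.mem_erase.1 hi).1
  rw [h2, Finset.sum_erase _ (by simp), ← Finset.card_filter]
  have h3 : Finset.univ.filter (fun i : Fin d => j < i) = Finset.Ioi j := by ext; simp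
  rw [h3, Fin.card_Ioi, card_before (fun _ => hk)]
  have h4 : ∑ i ∈ Finset.univ.filter (fun i : Fin d => i < j), k = k * j.val := by
    rw [Finset.sum_const, smul_eq_mul]
    have : Finset.univ.filter (fun i : Fin d => i < j) = Finset.Iio j := by ext; simp
    rw [this, Fin.card_Iio, Nat.mul_comm]
  rw [h4, dInr]
  try omega
end
lemma arith1 (kk jv jv' dd A A' mj' : ℕ) (h : jv < jv') (hd' : jv' < dd)
    (hA : A + mj' ≤ A') (hmk' : 2 ≤ mj' + kk) (hk : 1 ≤ kk) :
    A + kk*jv + (dd-1-jv) < A' + kk*jv' + (dd-1-jv') := by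
  obtain ⟨c, rfl⟩ : ∃ c, jv' = jv + (c+1) := ⟨jv' - jv - 1, by omega⟩
  obtain ⟨s, rfl⟩ : ∃ s, dd = jv + (c+1) + (s+1) := ⟨dd - (jv + (c+1)) - 1, by omega⟩
  have e1 : jv + (c+1) + (s+1) - 1 - jv = c + 1 + s := by omega
  have e2 : jv + (c+1) + (s+1) - 1 - (jv + (c+1)) = s := by omega
  have e3 : kk * (jv + (c+1)) = kk*jv + kk*c + kk := by ring
  have hc : c ≤ kk * c := Nat.le_mul_of_pos_left _ hk
  rw [e1, e2, e3]
  set x := kk * jv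
  set y := kk * c
  omega

lemma arith2 (kk jv dd A mj m0 : ℕ) (h : 1 ≤ jv) (hd' : jv < dd)
    (hA : m0 + mj ≤ A) (hmk' : 2 ≤ mj + kk) (hm : 1 ≤ m0) (hk : 1 ≤ kk) :
    dd < A + kk*jv + (dd-1-jv) := by
  obtain ⟨c, rfl⟩ : ∃ c, jv = c + 1 := ⟨jv - 1, by omega⟩
  obtain ⟨s, rfl⟩ : ∃ s, dd = (c+1) + (s+1) := ⟨dd - (c+1) - 1, by omega⟩
  have e1 : (c+1) + (s+1) - 1 - (c+1) = s := by omega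
  have e3 : kk * (c+1) = kk*c + kk := by ring
  have hc : c ≤ kk * c := Nat.le_mul_of_pos_left _ hk
  rw [e1, e3]
  set y := kk * c
  omega

section
variable {d k : ℕ} {m : Fin d → ℕ}

lemma dInr_strictMono (hk : 1 ≤ k) (hmk : ∀ i : Fin d, 2 ≤ m i + k) :
    StrictMono (dInr d k m) := by
  intro j j' h
  have hA : (∑ t ∈ Finset.univ.filter (fun t : Fin d => t ≤ j), m t) + m j'
      ≤ ∑ t ∈ Finset.univ.filter (fun t : Fin d => t ≤ j'), m t := by
    have hsub : insert j' (Finset.univ.filter (fun t : Fin d => t ≤ j))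
        ⊆ Finset.univ.filter (fun t : Fin d => t ≤ j') := by
      intro t ht
      rcases Finset.mem_insert.1 ht with rfl | ht
      · simp
      · simp only [Finset.mem_filter, Finset.mem_univ, true_and] at ht ⊢
        exact ht.trans h.le
    have hnot : j' ∉ Finset.univ.filter (fun t : Fin d => t ≤ j) := by
      simp [not_le.2 h]
    calc (∑ t ∈ Finset.univ.filter (fun t : Fin d => t ≤ j), m t) + m j'
        = ∑ t ∈ insert j' (Finset.univ.filter (fun t : Fin d => t ≤ j)), m t := by
          rw [Finset.sum_insert hnot]; ring
      _ ≤ _ := Finset.sum_le_sum_of_subset hsub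
  exact arith1 k j.val j'.val d _ _ (m j') h j'.isLt hA (hmk j') hk

lemma dInr_gt (hd : 0 < d) (hm : 1 ≤ m ⟨0, hd⟩) (hk : 1 ≤ k)
    (hmk : ∀ i : Fin d, 2 ≤ m i + k) (j : Fin d) (hj : 1 ≤ j.val) :
    d < dInr d k m j := by
  have hne : (⟨0, hd⟩ : Fin d) ≠ j := by
    intro h; rw [Fin.ext_iff] at h; simp at h; omega
  have hle : (⟨0, hd⟩ : Fin d) ≤ j := by
    rw [Fin.le_def]; exact Nat.zero_le _
  have hsub : ({⟨0, hd⟩, j} : Finset (Fin d)) ⊆ Finset.univ.filter (fun t : Fin d => t ≤ j) := by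
    intro t ht
    rcases Finset.mem_insert.1 ht with rfl | ht
    · exact Finset.mem_filter.2 ⟨Finset.mem_univ _, hle⟩
    · rw [Finset.mem_singleton] at ht; subst ht
      exact Finset.mem_filter.2 ⟨Finset.mem_univ _, le_refl _⟩
  have hM : m ⟨0, hd⟩ + m j ≤ ∑ t ∈ Finset.univ.filter (fun t : Fin d => t ≤ j), m t := by
    calc m ⟨0, hd⟩ + m j = ∑ t ∈ ({⟨0, hd⟩, j} : Finset (Fin d)), m t :=
          (Finset.sum_pair hne).symm
      _ ≤ _ := Finset.sum_le_sum_of_subset hsub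
  exact arith2 k j.val d _ (m j) (m ⟨0, hd⟩) hj j.isLt hM (hmk j) hm hk

lemma dInr_ge (hd : 0 < d) (hm : 1 ≤ m ⟨0, hd⟩) (hk : 1 ≤ k) (j : Fin d) :
    d ≤ dInr d k m j := by
  have hle : (⟨0, hd⟩ : Fin d) ≤ j := by rw [Fin.le_def]; exact Nat.zero_le _
  have h0 : (⟨0, hd⟩ : Fin d) ∈ Finset.univ.filter (fun t : Fin d => t ≤ j) :=
    Finset.mem_filter.2 ⟨Finset.mem_univ _, hle⟩
  have hM : m ⟨0, hd⟩ ≤ ∑ t ∈ Finset.univ.filter (fun t : Fin d => t ≤ j), m t :=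
    Finset.single_le_sum (fun _ _ => Nat.zero_le _) h0
  have p2 : j.val ≤ k * j.val := Nat.le_mul_of_pos_left _ hk
  have hd' : j.val < d := j.isLt
  unfold dInr
  set A := ∑ t ∈ Finset.univ.filter (fun t : Fin d => t ≤ j), m t with hA'
  clear_value A
  set a := k * j.val with ha'
  clear_value a
  omega
end
lemma card_filter_lt_of_lt {S : Finset ℕ} {a b : ℕ} (hb : b ∈ S) (hab : a < b) :
    (S.filter (fun z => b < z)).card < (S.filter (fun z => a < z)).card := by
  apply Finset.card_lt_card
  rw [Finset.ssubset_iff_of_subset]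
  · exact ⟨b, Finset.mem_filter.2 ⟨hb, hab⟩, by simp⟩
  · intro z hz
    rw [Finset.mem_filter] at hz ⊢
    exact ⟨hz.1, lt_trans hab hz.2⟩

lemma getD_reverse_sort (S : Finset ℕ) (x : ℕ) (hx : x ∈ S) :
    ((S.sort (· ≤ ·)).reverse).getD ((S.filter (fun y => x < y)).card) 0 = x := by
  classical
  set L := (S.sort (· ≤ ·)).reverse with hL
  set t := (S.filter (fun y => x < y)).card with htdef
  have hnd : L.Nodup := List.nodup_reverse.2 (S.sort_nodup _)
  have hsorted : L.Pairwise (· > ·) := by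
    rw [hL]
    exact List.pairwise_reverse.2 (S.sortedLT_sort.pairwise)
  have hlen : L.length = S.card := by simp [hL]
  have hmemL : ∀ z, z ∈ L ↔ z ∈ S := by intro z; simp [hL]
  have ht : t < L.length := by
    rw [hlen, htdef]
    apply Finset.card_lt_card
    rw [Finset.ssubset_iff_of_subset (Finset.filter_subset _ _)]
    exact ⟨x, hx, by simp⟩
  rw [List.getD_eq_getElem L 0 ht]
  set y := L[t] with hy
  have hyL : y ∈ L := List.getElem_mem ht
  have hyS : y ∈ S := (hmemL y).1 hyL
  have key : S.filter (fun z => y < z) = (L.take t).toFinset := by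
    ext z
    simp only [Finset.mem_filter, List.mem_toFinset]
    constructor
    · rintro ⟨hzS, hyz⟩
      obtain ⟨i, hi, hiz⟩ := List.getElem_of_mem ((hmemL z).2 hzS)
      have hit : i < t := by
        by_contra hge
        push_neg at hge
        rcases eq_or_lt_of_le hge with rfl | hlt
        · rw [hiz] at hy; omega
        · have := List.Pairwise.rel_get_of_lt hsorted
            (a := ⟨t, ht⟩) (b := ⟨i, hi⟩) (by exact hlt)
          simp only [List.get_eq_getElem] at this
          rw [hiz] at this; omega
      have : (L.take t)[i]'(by simp [hi, hit]) = z := by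
        rw [List.getElem_take]; exact hiz
      exact this ▸ List.getElem_mem _
    · intro hz
      obtain ⟨i, hi, hiz⟩ := List.getElem_of_mem hz
      have hi' : i < t := by simpa using (lt_of_lt_of_le hi (by simp))
      have hiL : i < L.length := lt_trans hi' ht
      have hzL : z ∈ L := by
        rw [← hiz, List.getElem_take]
        exact List.getElem_mem hiL
      refine ⟨(hmemL z).1 hzL, ?_⟩
      have := List.Pairwise.rel_get_of_lt hsorted (a := ⟨i, hiL⟩) (b := ⟨t, ht⟩) (by exact hi')
      simp only [List.get_eq_getElem] at this
      rw [← hiz, List.getElem_take]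
      exact this
  have hcard : (S.filter (fun z => y < z)).card = t := by
    rw [key, List.toFinset_card_of_nodup (hnd.sublist (List.take_sublist _ _)),
      List.length_take]
    omega
  rcases lt_trichotomy x y with h | h | h
  · have := card_filter_lt_of_lt hyS h
    omega
  · exact h.symm
  · have := card_filter_lt_of_lt hx h
    omega
section
variable {d k : ℕ} {m : Fin d → ℕ}

lemma count_ge (hk : 1 ≤ k) (x : ℕ) :
    (Finset.univ.filter (fun v : TV d m (fun _ => k) =>
        x ≤ ((thrEdges d m fun _ => k).filter (fun e => v ∈ e)).card)).card
      = (∑ j ∈ Finset.univ.filter (fun j : Fin d => x ≤ d - j.val), m j)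
        + k * (Finset.univ.filter (fun j : Fin d => x ≤ dInr d k m j)).card := by
  rw [Finset.card_filter, Fintype.sum_sum_type]
  rw [← Finset.univ_sigma_univ, Finset.sum_sigma, ← Finset.univ_sigma_univ, Finset.sum_sigma]
  simp only [deg_inl hk, deg_inr hk, Finset.sum_const, Finset.card_univ, Fintype.card_fin,
    smul_eq_mul, mul_ite, mul_one, mul_zero]
  congr 1
  · rw [Finset.sum_filter]
  · rw [← Finset.sum_filter, Finset.sum_const, smul_eq_mul, mul_comm]
end

/-- Column sums of the Ferrer's diagram of the degree sequence of a `k`-threshold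
hypergraph: `C_i = ∑_{j=1}^{d-i+1} m_j + k·d` for `i = 1, …, d`, and
`C_{D_{d-i+1}} = k(d-i+1)` for `i = 2, …, d` (all `1`-indexed). -/
theorem stmt_19 (d : ℕ) (hd : 0 < d) (m : Fin d → ℕ) (k : ℕ)
    (hm : 1 ≤ m ⟨0, hd⟩) (hk : 1 ≤ k) (hmk : ∀ i : Fin d, 2 ≤ m i + k) :
    let deg : TV d m (fun _ => k) → ℕ :=
      fun v => ((thrEdges d m fun _ => k).filter (fun e => v ∈ e)).card
    let D : ℕ → ℕ :=
      fun i => (((Finset.univ.image deg).sort (· ≤ ·)).reverse).getD (i - 1) 0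
    let C : ℕ → ℕ := fun j => (Finset.univ.filter (fun v => j ≤ deg v)).card
    (∀ i, 1 ≤ i → i ≤ d →
        C i = (∑ j ∈ Finset.univ.filter (fun j : Fin d => j.val ≤ d - i), m j) + k * d) ∧
      ∀ i, 2 ≤ i → i ≤ d → C (D (d - i + 1)) = k * (d - i + 1) := by
  intro deg D C
  constructor
  · intro i hi1 hi2
    simp only [C, deg]
    rw [count_ge hk i]
    congr 1
    · apply Finset.sum_congr _ fun _ _ => rfl
      refine Finset.filter_congr fun j _ => ?_
      have := j.isLt
      constructor <;> intro <;> omega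
    · rw [Finset.filter_true_of_mem fun j _ => le_trans hi2 (dInr_ge hd hm hk j),
        Finset.card_univ, Fintype.card_fin]
  · intro i hi2 hid
    have hd2 : 2 ≤ d := le_trans hi2 hid
    set t := d - i + 1 with htdef
    have ht1 : 1 ≤ t := by omega
    have ht2 : t ≤ d - 1 := by omega
    have hj0lt : d - t < d := by omega
    set j0 : Fin d := ⟨d - t, hj0lt⟩ with hj0
    set x := dInr d k m j0 with hx
    have hj0valeq : (j0 : ℕ) = d - t := rfl
    have hj0v : 1 ≤ j0.val := by omega
    have hxd : d < x := dInr_gt hd hm hk hmk j0 hj0v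
    simp only [C, D, deg]
    have hxS : x ∈ Finset.univ.image
        (fun v : TV d m (fun _ => k) =>
          ((thrEdges d m fun _ => k).filter (fun e => v ∈ e)).card) :=
      Finset.mem_image.2 ⟨Sum.inr ⟨j0, ⟨0, hk⟩⟩, Finset.mem_univ _, deg_inr hk j0 ⟨0, hk⟩⟩
    have hset : (Finset.univ.image
        (fun v : TV d m (fun _ => k) =>
          ((thrEdges d m fun _ => k).filter (fun e => v ∈ e)).card)).filter
          (fun y => x < y)
        = (Finset.univ.filter (fun j : Fin d => j0 < j)).image (dInr d k m) := by
      ext y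
      simp only [Finset.mem_filter, Finset.mem_image, Finset.mem_univ, true_and]
      constructor
      · rintro ⟨⟨v, rfl⟩, hxy⟩
        rcases v with ⟨j, a⟩ | ⟨j, b⟩
        · rw [deg_inl hk] at hxy ⊢
          have := j.isLt
          omega
        · rw [deg_inr hk] at hxy ⊢
          exact ⟨j, (dInr_strictMono hk hmk).lt_iff_lt.1 hxy, rfl⟩
      · rintro ⟨j, hj, rfl⟩
        exact ⟨⟨Sum.inr ⟨j, ⟨0, hk⟩⟩, deg_inr hk j ⟨0, hk⟩⟩,
          (dInr_strictMono hk hmk).lt_iff_lt.2 hj⟩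
    have hcard : ((Finset.univ.image
        (fun v : TV d m (fun _ => k) =>
          ((thrEdges d m fun _ => k).filter (fun e => v ∈ e)).card)).filter
          (fun y => x < y)).card = t - 1 := by
      rw [hset, Finset.card_image_of_injective _ (dInr_strictMono hk hmk).injective]
      have : Finset.univ.filter (fun j : Fin d => j0 < j) = Finset.Ioi j0 := by ext; simp
      rw [this, Fin.card_Ioi]
      omega
    have hD := getD_reverse_sort (Finset.univ.image
        (fun v : TV d m (fun _ => k) =>
          ((thrEdges d m fun _ => k).filter (fun e => v ∈ e)).card)) x hxS
    rw [hcard] at hD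
    rw [hD, count_ge hk x]
    have hempty : Finset.univ.filter (fun j : Fin d => x ≤ d - j.val) = ∅ := by
      refine Finset.filter_false_of_mem fun j _ => ?_
      have := j.isLt
      omega
    rw [hempty, Finset.sum_empty]
    have hfe : Finset.univ.filter (fun j : Fin d => x ≤ dInr d k m j)
        = Finset.univ.filter (fun j : Fin d => j0 ≤ j) :=
      Finset.filter_congr fun j _ => by
        rw [hx, (dInr_strictMono hk hmk).le_iff_le]
    rw [hfe]
    have : Finset.univ.filter (fun j : Fin d => j0 ≤ j) = Finset.Ici j0 := by ext; simp
    rw [this, Fin.card_Ici]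
    have hval : d - (j0 : ℕ) = t := by omega
    rw [hval]
    exact Nat.zero_add _
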